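/- Let f : ℂ → Mat_{m×2}(ℂ) be differentiable with f(0) = 0, set f^♯ := J_m fᵗ J₂ (with J_m, J₂ the anti-diagonal identities), and let g : ℂ → Mat_{m×m}(ℂ) satisfy g' = −f·(f')^♯ with g(0) = 0, where ' denotes the complex derivative. Define the block upper triangular matrix H(z, λ) = [[I_m, λ⁻¹ f(z), λ⁻² g(z)], [0, I₂, −λ⁻¹ f(z)^♯], [0, 0, I_m]] for λ ∈ ℂ\{0}. Then H(0, λ) = I and H satisfies the ODE ∂H/∂z = H · 𝒫(z, λ), where 𝒫(z, λ) = λ⁻¹ [[0, f'(z), 0], [0, 0, −(f'(z))^♯], [0, 0, 0]]. -/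

import Mathlib

/-- The anti-diagonal identity matrix `Jₙ`. -/
def Jmat (n : ℕ) : Matrix (Fin n) (Fin n) ℂ :=
  Matrix.of fun i j => if (i : ℕ) + (j : ℕ) + 1 = n then (1 : ℂ) else 0

/-- For an `m×2` matrix `f`, its sharp `f^♯ = J₂ fᵗ J_m` (a `2×m` matrix). -/
noncomputable def sharp {m : ℕ} (f : Matrix (Fin m) (Fin 2) ℂ) : Matrix (Fin 2) (Fin m) ℂ :=
  Jmat 2 * f.transpose * Jmat m

/-- A `3×3` block matrix with blocks of sizes `m, 2, m`. -/
def block3 {m : ℕ}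
    (A11 : Matrix (Fin m) (Fin m) ℂ) (A12 : Matrix (Fin m) (Fin 2) ℂ)
    (A13 : Matrix (Fin m) (Fin m) ℂ) (A21 : Matrix (Fin 2) (Fin m) ℂ)
    (A22 : Matrix (Fin 2) (Fin 2) ℂ) (A23 : Matrix (Fin 2) (Fin m) ℂ)
    (A31 : Matrix (Fin m) (Fin m) ℂ) (A32 : Matrix (Fin m) (Fin 2) ℂ)
    (A33 : Matrix (Fin m) (Fin m) ℂ) :
    Matrix (Fin m ⊕ (Fin 2 ⊕ Fin m)) (Fin m ⊕ (Fin 2 ⊕ Fin m)) ℂ :=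
  Matrix.fromBlocks A11 (Matrix.fromCols A12 A13)
    (Matrix.fromRows A21 A31) (Matrix.fromBlocks A22 A23 A32 A33)

lemma block3_mul {m : ℕ}
    (A11 B11 : Matrix (Fin m) (Fin m) ℂ) (A12 B12 : Matrix (Fin m) (Fin 2) ℂ)
    (A13 B13 : Matrix (Fin m) (Fin m) ℂ) (A21 B21 : Matrix (Fin 2) (Fin m) ℂ)
    (A22 B22 : Matrix (Fin 2) (Fin 2) ℂ) (A23 B23 : Matrix (Fin 2) (Fin m) ℂ)
    (A31 B31 : Matrix (Fin m) (Fin m) ℂ) (A32 B32 : Matrix (Fin m) (Fin 2) ℂ)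
    (A33 B33 : Matrix (Fin m) (Fin m) ℂ) :
    block3 A11 A12 A13 A21 A22 A23 A31 A32 A33 * block3 B11 B12 B13 B21 B22 B23 B31 B32 B33 =
    block3 (A11*B11 + A12*B21 + A13*B31) (A11*B12 + A12*B22 + A13*B32) (A11*B13 + A12*B23 + A13*B33)
           (A21*B11 + A22*B21 + A23*B31) (A21*B12 + A22*B22 + A23*B32) (A21*B13 + A22*B23 + A23*B33)
           (A31*B11 + A32*B21 + A33*B31) (A31*B12 + A32*B22 + A33*B32) (A31*B13 + A32*B23 + A33*B33) := by
  ext (i|i|i) (j|j|j) <;>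
    simp [block3, Matrix.mul_apply, Fintype.sum_sum_type, Matrix.fromCols, Matrix.fromRows_apply_inl, Matrix.fromRows_apply_inr,
      Finset.sum_add_distrib] <;> ring

lemma block3_smul {m : ℕ} (c : ℂ)
    (A11 : Matrix (Fin m) (Fin m) ℂ) (A12 : Matrix (Fin m) (Fin 2) ℂ)
    (A13 : Matrix (Fin m) (Fin m) ℂ) (A21 : Matrix (Fin 2) (Fin m) ℂ)
    (A22 : Matrix (Fin 2) (Fin 2) ℂ) (A23 : Matrix (Fin 2) (Fin m) ℂ)
    (A31 : Matrix (Fin m) (Fin m) ℂ) (A32 : Matrix (Fin m) (Fin 2) ℂ)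
    (A33 : Matrix (Fin m) (Fin m) ℂ) :
    c • block3 A11 A12 A13 A21 A22 A23 A31 A32 A33 =
    block3 (c•A11) (c•A12) (c•A13) (c•A21) (c•A22) (c•A23) (c•A31) (c•A32) (c•A33) := by
  ext (i|i|i) (j|j|j) <;>
    simp [block3, Matrix.fromCols, Matrix.fromRows_apply_inl, Matrix.fromRows_apply_inr]

lemma hasDerivAt_sharp {m : ℕ} (f f' : ℂ → Matrix (Fin m) (Fin 2) ℂ)
    (hf : ∀ z i j, HasDerivAt (fun w => f w i j) (f' z i j) z)
    (z : ℂ) (i : Fin 2) (j : Fin m) :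
    HasDerivAt (fun w => sharp (f w) i j) (sharp (f' z) i j) z := by
  simp only [sharp, Matrix.mul_apply, Matrix.transpose_apply]
  apply HasDerivAt.fun_sum
  intro l _
  exact ((HasDerivAt.fun_sum (fun k _ => ((hf z l k).const_mul (Jmat 2 i k)))).mul_const _)

theorem stmt3 (m : ℕ)
    (f f' : ℂ → Matrix (Fin m) (Fin 2) ℂ)
    (g : ℂ → Matrix (Fin m) (Fin m) ℂ)
    (hf : ∀ z i j, HasDerivAt (fun w => f w i j) (f' z i j) z)
    (hf0 : f 0 = 0)
    (hg : ∀ z i j, HasDerivAt (fun w => g w i j) ((-(f z * sharp (f' z))) i j) z)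
    (hg0 : g 0 = 0)
    (H : ℂ → ℂ → Matrix (Fin m ⊕ (Fin 2 ⊕ Fin m)) (Fin m ⊕ (Fin 2 ⊕ Fin m)) ℂ)
    (hH : ∀ lam z, H lam z =
      block3 1 (lam⁻¹ • f z) ((lam⁻¹)^2 • g z)
             0 1 (-(lam⁻¹ • sharp (f z)))
             0 0 1)
    (P : ℂ → ℂ → Matrix (Fin m ⊕ (Fin 2 ⊕ Fin m)) (Fin m ⊕ (Fin 2 ⊕ Fin m)) ℂ)
    (hP : ∀ z lam, P z lam =
      lam⁻¹ • block3 0 (f' z) 0 0 0 (-(sharp (f' z))) 0 0 0) :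
    ∀ lam : ℂ, lam ≠ 0 →
      (H lam 0 = 1 ∧
       ∀ z i j, HasDerivAt (fun w => H lam w i j) ((H lam z * P z lam) i j) z) := by
  intro lam _
  constructor
  · rw [hH, hf0, hg0]
    have hs : sharp (0 : Matrix (Fin m) (Fin 2) ℂ) = 0 := by
      simp [sharp]
    rw [hs]
    ext (i|i|i) (j|j|j) <;>
      simp [block3, Matrix.fromCols, Matrix.fromRows_apply_inl, Matrix.fromRows_apply_inr, Matrix.one_apply]
  · intro z i j
    have key : H lam z * P z lam =
        block3 0 (lam⁻¹ • f' z)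
          ((lam⁻¹)^2 • (-(f z * sharp (f' z))))
          0 0 (-(lam⁻¹ • sharp (f' z))) 0 0 0 := by
      rw [hH, hP, mul_smul_comm, block3_mul, block3_smul]
      congr 1 <;> simp [Matrix.mul_smul, smul_smul, Matrix.mul_neg, sq]
    rw [key]
    simp only [hH]
    rcases i with i | i | i <;> rcases j with j | j | j <;>
      simp only [block3, Matrix.fromBlocks_apply₁₁, Matrix.fromBlocks_apply₁₂,
        Matrix.fromBlocks_apply₂₁, Matrix.fromBlocks_apply₂₂, Matrix.fromCols,
        Matrix.fromRows_apply_inl, Matrix.fromRows_apply_inr, Matrix.of_apply, Sum.elim_inl, Sum.elim_inr]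
    · simpa using hasDerivAt_const z ((1 : Matrix (Fin m) (Fin m) ℂ) i j)
    · simp only [Matrix.smul_apply, smul_eq_mul]
      exact (hf z i j).const_mul _
    · simp only [Matrix.smul_apply, smul_eq_mul]
      have := (hg z i j).const_mul ((lam⁻¹)^2)
      simpa [smul_smul, sq, mul_assoc] using this
    · simpa using hasDerivAt_const z (0 : ℂ)
    · simpa using hasDerivAt_const z ((1 : Matrix (Fin 2) (Fin 2) ℂ) i j)
    · simp only [Matrix.neg_apply, Matrix.smul_apply, smul_eq_mul]
      exact (((hasDerivAt_sharp f f' hf z i j).const_mul (lam⁻¹)).neg)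
    · simpa using hasDerivAt_const z (0 : ℂ)
    · simpa using hasDerivAt_const z (0 : ℂ)
    · simpa using hasDerivAt_const z ((1 : Matrix (Fin m) (Fin m) ℂ) i j)
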